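/- arXiv:1504.00848 — 2 statements merged into one kernel-verified Lean document; each statement's English description precedes it below -/
import Mathlib

section
/- Assume Notation (t, k₀, B, D, C) with B even and D ≥ 1, set ℓ = ⌊log₂ D⌋, and assume C − 2^{⌊log₂ C⌋} < 2^{ℓ+1}. Let j, g be integers with 0 ≤ j, g ≤ C such that C(C,j) and C(C,g) are odd, 2^{ℓ+1} divides C−j−g, and |C−j−g| < 2^t. Then the binomial coefficient C(2^t(B+1)−C−2, 2^t(B+1)+C−1−j−2g) (interpreted as 0 when the lower entry is negative or exceeds the upper entry) is even, except possibly when C = 2^{ℓ+2}−1, t ≥ ℓ+2, and C−j−g = −2^{ℓ+1}. -/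
private lemma and_div_two' (a b : ℕ) : (a &&& b) / 2 = a / 2 &&& b / 2 :=
  Nat.eq_of_testBit_eq fun i => by
    simp [Nat.testBit_div_two, Nat.testBit_and]

private lemma or_div_two' (a b : ℕ) : (a ||| b) / 2 = a / 2 ||| b / 2 :=
  Nat.eq_of_testBit_eq fun i => by
    simp [Nat.testBit_div_two, Nat.testBit_or]

private lemma and_mod_two' (a b : ℕ) :
    (a &&& b) % 2 = if a % 2 = 1 ∧ b % 2 = 1 then 1 else 0 := by
  have h := Nat.testBit_and a b 0
  simp only [Nat.testBit_zero] at h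
  rcases Nat.mod_two_eq_zero_or_one a with ha | ha <;>
    rcases Nat.mod_two_eq_zero_or_one b with hb | hb <;>
      rcases Nat.mod_two_eq_zero_or_one (a &&& b) with hm | hm <;>
        simp [ha, hb, hm] at h ⊢ <;> omega

private lemma or_mod_two' (a b : ℕ) :
    (a ||| b) % 2 = if a % 2 = 1 ∨ b % 2 = 1 then 1 else 0 := by
  have h := Nat.testBit_or a b 0
  simp only [Nat.testBit_zero] at h
  rcases Nat.mod_two_eq_zero_or_one a with ha | ha <;>
    rcases Nat.mod_two_eq_zero_or_one b with hb | hb <;>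
      rcases Nat.mod_two_eq_zero_or_one (a ||| b) with hm | hm <;>
        simp [ha, hb, hm] at h ⊢ <;> omega

private lemma and_zero_rec' (a b : ℕ) :
    a &&& b = 0 ↔ (¬(a % 2 = 1 ∧ b % 2 = 1) ∧ a / 2 &&& b / 2 = 0) := by
  have h1 := and_mod_two' a b
  have h2 := and_div_two' a b
  constructor
  · intro h
    rw [h] at h1 h2
    constructor
    · intro hc
      rw [if_pos hc] at h1
      omega
    · simpa using h2.symm
  · rintro ⟨hc, hd⟩
    rw [if_neg hc] at h1
    rw [hd] at h2
    omega

private lemma add_or_aux' : ∀ N a b : ℕ, a + b ≤ N → a &&& b = 0 → a + b = a ||| b := by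
  intro N
  induction N with
  | zero =>
    intro a b h _
    have ha : a = 0 := by omega
    have hb : b = 0 := by omega
    subst ha; subst hb; simp
  | succ N ih =>
    intro a b hab h
    rcases Nat.eq_zero_or_pos (a + b) with h0 | hpos
    · have ha : a = 0 := by omega
      have hb : b = 0 := by omega
      subst ha; subst hb; simp
    · have hrec := (and_zero_rec' a b).mp h
      have hIH := ih (a / 2) (b / 2) (by omega) hrec.2
      have hmod := or_mod_two' a b
      have hdiv := or_div_two' a b
      have hnb := hrec.1
      rw [← hIH] at hdiv
      split_ifs at hmod with hcond <;> omega

private lemma kummer_aux' : ∀ N a b : ℕ, a + b ≤ N →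
    (a + b).choose a % 2 = if a &&& b = 0 then 1 else 0 := by
  intro N
  induction N with
  | zero =>
    intro a b h
    have ha : a = 0 := by omega
    have hb : b = 0 := by omega
    subst ha; subst hb; simp
  | succ N ih =>
    intro a b hab
    rcases Nat.eq_zero_or_pos (a + b) with h0 | hpos
    · have ha : a = 0 := by omega
      have hb : b = 0 := by omega
      subst ha; subst hb; simp
    · haveI : Fact (Nat.Prime 2) := ⟨Nat.prime_two⟩
      have hl := Choose.choose_modEq_choose_mod_mul_choose_div_nat (p := 2) (n := a + b) (k := a)
      by_cases hodd : a % 2 = 1 ∧ b % 2 = 1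
      · have h1 : (a + b) % 2 = 0 := by omega
        rw [h1, hodd.1, show Nat.choose 0 1 = 0 from rfl, zero_mul] at hl
        have hne : a &&& b ≠ 0 := fun hz => ((and_zero_rec' a b).mp hz).1 hodd
        rw [if_neg hne]
        simpa [Nat.ModEq] using hl
      · have hd2 : (a + b) / 2 = a / 2 + b / 2 := by omega
        have h1 : Nat.choose ((a + b) % 2) (a % 2) = 1 := by
          rcases Nat.mod_two_eq_zero_or_one a with ha | ha <;>
            rcases Nat.mod_two_eq_zero_or_one b with hb | hb
          · rw [show (a + b) % 2 = 0 by omega, ha]; rfl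
          · rw [show (a + b) % 2 = 1 by omega, ha]; rfl
          · rw [show (a + b) % 2 = 1 by omega, ha]; rfl
          · exact absurd ⟨ha, hb⟩ hodd
        rw [h1, one_mul, hd2] at hl
        have hIH := ih (a / 2) (b / 2) (by omega)
        rw [hl, hIH]
        have hiff : (a &&& b = 0) ↔ (a / 2 &&& b / 2 = 0) := by
          rw [and_zero_rec' a b]; tauto
        by_cases hz : a / 2 &&& b / 2 = 0
        · rw [if_pos hz, if_pos (hiff.mpr hz)]
        · rw [if_neg hz, if_neg (fun hh => hz (hiff.mp hh))]

private lemma le_of_testBit_subset' {a b : ℕ}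
    (h : ∀ i, a.testBit i = true → b.testBit i = true) : a ≤ b := by
  have heq : a &&& b = a := Nat.eq_of_testBit_eq fun i => by
    rw [Nat.testBit_and]
    cases hai : a.testBit i
    · simp
    · simp [h i hai]
  calc a = a &&& b := heq.symm
    _ ≤ b := Nat.and_le_right

private lemma testBit_subset_of_odd_choose' {n k : ℕ} (hk : k ≤ n) (h : Odd (n.choose k)) :
    ∀ i, k.testBit i = true → n.testBit i = true := by
  have hb : k + (n - k) = n := by omega
  have h0 : k &&& (n - k) = 0 := by
    by_contra hne
    have hk2 := kummer_aux' (k + (n - k)) k (n - k) le_rfl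
    rw [hb, if_neg hne] at hk2
    rw [Nat.odd_iff, hk2] at h
    exact absurd h (by omega)
  intro i hi
  have hor := add_or_aux' (k + (n - k)) k (n - k) le_rfl h0
  rw [hb] at hor
  rw [hor, Nat.testBit_or, hi]
  simp

/-- With `k = 2^t + k₀` (`1 ≤ k₀ ≤ 2^t`), `n = k + 1 + 2^t·B + D` (`B ≥ 1` even,
`1 ≤ D < 2^t`), `C = k₀ + D − 1`, `ℓ = ⌊log₂ D⌋`, `C − 2^⌊log₂ C⌋ < 2^{ℓ+1}`:
if `0 ≤ j, g ≤ C`, `C(C,j)` and `C(C,g)` are odd, `2^{ℓ+1} ∣ C−j−g` and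
`|C−j−g| < 2^t`, then `C(2^t(B+1)−C−2, 2^t(B+1)+C−1−j−2g)` (interpreted as `0`
when the lower entry is negative or exceeds the upper entry) is even, except
possibly when `C = 2^{ℓ+2}−1`, `t ≥ ℓ+2` and `C−j−g = −2^{ℓ+1}`. -/
theorem middle_coeff_even (n k t k₀ B D C ℓ : ℕ)
    (hk₀ : 1 ≤ k₀) (hk₀' : k₀ ≤ 2 ^ t) (hk : k = 2 ^ t + k₀)
    (hB : 1 ≤ B) (hD : D < 2 ^ t) (hn : n = k + 1 + 2 ^ t * B + D)
    (hC : C = k₀ + D - 1)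
    (hBeven : Even B) (hD1 : 1 ≤ D) (hl : ℓ = Nat.log 2 D)
    (hCsmall : C - 2 ^ (Nat.log 2 C) < 2 ^ (ℓ + 1))
    (j g : ℕ) (hj : j ≤ C) (hg : g ≤ C)
    (hCj : Odd (Nat.choose C j)) (hCg : Odd (Nat.choose C g))
    (hdvd : (2 ^ (ℓ + 1) : ℤ) ∣ ((C : ℤ) - j - g))
    (habs : |(C : ℤ) - j - g| < 2 ^ t)
    (hexc : ¬(C = 2 ^ (ℓ + 2) - 1 ∧ ℓ + 2 ≤ t ∧ (C : ℤ) - j - g = -2 ^ (ℓ + 1))) :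
    Even (if 0 ≤ (2 ^ t * (B + 1) : ℤ) + C - 1 - j - 2 * g then
        Nat.choose (2 ^ t * (B + 1) - C - 2)
          ((2 ^ t * (B + 1) : ℤ) + C - 1 - j - 2 * g).toNat
      else 0) := by
  have hNcast : ((2 ^ t * (B + 1) : ℕ) : ℤ) = (2 ^ t * (B + 1) : ℤ) := by push_cast; ring
  rw [← hNcast]
  set c := Nat.log 2 C with hc_def
  have hC1 : 1 ≤ C := by omega
  have hc1 : 2 ^ c ≤ C := by rw [hc_def]; exact Nat.pow_log_le_self 2 (by omega)
  have hc2 : C < 2 ^ (c + 1) := by rw [hc_def]; exact Nat.lt_pow_succ_log_self (by norm_num) C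
  have hc2' : 2 ^ (c + 1) = 2 * 2 ^ c := by rw [pow_succ]; ring
  set s₀ := C - 2 ^ c with hs0_def
  have hs₀ : s₀ < 2 ^ (ℓ + 1) := hCsmall
  have hs₀c : s₀ < 2 ^ c := by omega
  have hCeq : C = 2 ^ c + s₀ := by omega
  have hDl : 2 ^ ℓ ≤ D := by rw [hl]; exact Nat.pow_log_le_self 2 (by omega)
  have hlt : ℓ < t := (Nat.pow_lt_pow_iff_right (by norm_num)).mp (lt_of_le_of_lt hDl hD)
  have h2t : 2 ^ (t + 1) = 2 * 2 ^ t := by rw [pow_succ]; ring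
  have hCt : C + 2 ≤ 2 ^ (t + 1) := by omega
  have hB2 : 2 ≤ B := by obtain ⟨m, hm⟩ := hBeven; omega
  have hNge : 3 * 2 ^ t ≤ 2 ^ t * (B + 1) := by
    calc 3 * 2 ^ t = 2 ^ t * 3 := by ring
    _ ≤ 2 ^ t * (B + 1) := Nat.mul_le_mul_left _ (by omega)
  have hm_le : C + 2 ≤ 2 ^ t * (B + 1) := by omega
  by_cases hcase : j + g ≤ C
  · -- C - j - g ≥ 0 : lower entry exceeds upper entry, binomial is 0
    split_ifs with hpos
    · have h9 : 2 ^ t * (B + 1) - C - 2 <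
          (((2 ^ t * (B + 1) : ℕ) : ℤ) + C - 1 - j - 2 * g).toNat := by omega
      rw [Nat.choose_eq_zero_of_lt h9]
      exact Even.zero
    · exact Even.zero
  · -- C < j + g
    set e := j + g - C with he_def
    have hjg : j + g = C + e := by omega
    have he1 : 1 ≤ e := by omega
    have hCjg : (C : ℤ) - j - g = -(e : ℤ) := by omega
    have hdvd2 : (2 : ℤ) ^ (ℓ + 1) ∣ (e : ℤ) := by
      rw [hCjg] at hdvd; exact (dvd_neg).mp hdvd
    have hdvdN : 2 ^ (ℓ + 1) ∣ e := by exact_mod_cast hdvd2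
    have he2 : e < 2 ^ t := by
      rw [hCjg, abs_neg, abs_of_nonneg (by positivity)] at habs
      exact_mod_cast habs
    have hel : 2 ^ (ℓ + 1) ≤ e := Nat.le_of_dvd (by omega) hdvdN
    -- bitwise subset facts
    have hsubj := testBit_subset_of_odd_choose' hj hCj
    have hsubg := testBit_subset_of_odd_choose' hg hCg
    have hCmod : C % 2 ^ c = s₀ := by
      rw [hCeq, Nat.add_mod_left, Nat.mod_eq_of_lt hs₀c]
    have hbitC : ∀ i, i < c → C.testBit i = s₀.testBit i := by
      intro i hi
      have h := Nat.testBit_mod_two_pow C c i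
      rw [hCmod] at h
      simp [hi] at h
      exact h.symm
    set j' := j % 2 ^ c with hj'_def
    set g' := g % 2 ^ c with hg'_def
    have hjsub' : ∀ i, j'.testBit i = true → s₀.testBit i = true := by
      intro i hi
      rw [hj'_def, Nat.testBit_mod_two_pow] at hi
      simp only [Bool.and_eq_true, decide_eq_true_eq] at hi
      rw [← hbitC i hi.1]
      exact hsubj i hi.2
    have hgsub' : ∀ i, g'.testBit i = true → s₀.testBit i = true := by
      intro i hi
      rw [hg'_def, Nat.testBit_mod_two_pow] at hi
      simp only [Bool.and_eq_true, decide_eq_true_eq] at hi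
      rw [← hbitC i hi.1]
      exact hsubg i hi.2
    have hj' : j' ≤ s₀ := le_of_testBit_subset' hjsub'
    have hg' : g' ≤ s₀ := le_of_testBit_subset' hgsub'
    set εj := j / 2 ^ c with hεj_def
    set εg := g / 2 ^ c with hεg_def
    have hjd : 2 ^ c * εj + j' = j := Nat.div_add_mod j (2 ^ c)
    have hgd : 2 ^ c * εg + g' = g := Nat.div_add_mod g (2 ^ c)
    have hju : εj < 2 := Nat.div_lt_of_lt_mul (by omega)
    have hgu : εg < 2 := Nat.div_lt_of_lt_mul (by omega)
    clear_value εj εg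
    have hj01 : εj = 0 ∨ εj = 1 := by omega
    have hg01 : εg = 0 ∨ εg = 1 := by omega
    rcases hj01 with hj0 | hj1 <;> rcases hg01 with hg0 | hg1
    · rw [hj0] at hjd; rw [hg0] at hgd
      simp only [Nat.mul_zero, Nat.mul_one, Nat.zero_add] at hjd hgd
      exfalso; omega
    · rw [hj0] at hjd; rw [hg1] at hgd
      simp only [Nat.mul_zero, Nat.mul_one, Nat.zero_add] at hjd hgd
      exfalso; omega
    · rw [hj1] at hjd; rw [hg0] at hgd
      simp only [Nat.mul_zero, Nat.mul_one, Nat.zero_add] at hjd hgd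
      exfalso; omega
    · rw [hj1] at hjd; rw [hg1] at hgd
      simp only [Nat.mul_zero, Nat.mul_one, Nat.zero_add] at hjd hgd
      -- main case: both have bit c
      have hjc : j = 2 ^ c + j' := by omega
      have hgc : g = 2 ^ c + g' := by omega
      have hesum : e + s₀ = 2 ^ c + (j' + g') := by omega
      have hclc : ℓ + 1 ≤ c := by
        by_contra hcl
        have h2 : 2 ^ (c + 1) ≤ 2 ^ (ℓ + 1) := Nat.pow_le_pow_right (by norm_num) (by omega)
        omega
      have hZ : ((2 ^ (ℓ + 1) : ℕ) : ℤ) = (2 : ℤ) ^ (ℓ + 1) := by push_cast; ring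
      have hx : (2 : ℤ) ^ (ℓ + 1) ∣ ((j' : ℤ) + g' - s₀) := by
        have h1 : ((j' : ℤ) + g' - s₀) = (e : ℤ) - 2 ^ c := by
          have : ((2 ^ c : ℕ) : ℤ) = (2 : ℤ) ^ c := by push_cast; ring
          omega
        rw [h1]
        exact dvd_sub hdvd2 (pow_dvd_pow 2 hclc)
      have hx0 : (j' : ℤ) + g' - s₀ = 0 := by
        by_contra hne
        have h1 : (2 : ℤ) ^ (ℓ + 1) ≤ |(j' : ℤ) + g' - s₀| :=
          Int.le_of_dvd (abs_pos.mpr hne) ((dvd_abs _ _).mpr hx)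
        have h2 : |(j' : ℤ) + g' - s₀| ≤ (s₀ : ℤ) := by
          rw [abs_le]; constructor <;> omega
        omega
      have hs0eq : j' + g' = s₀ := by omega
      have hec : e = 2 ^ c := by omega
      have hct : c < t := by
        have := hec ▸ he2
        exact (Nat.pow_lt_pow_iff_right (by norm_num)).mp this
      have h2c1 : (0:ℕ) < 2 ^ (c + 1) := Nat.two_pow_pos _
      by_cases hall : ∀ i, i < c → (j'.testBit i = true ∨ g'.testBit i = true)
      · -- exceptional case
        exfalso; apply hexc
        have h1 : 2 ^ c - 1 ≤ j' ||| g' := by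
          apply le_of_testBit_subset'
          intro i hi
          rw [Nat.testBit_two_pow_sub_one] at hi
          simp only [decide_eq_true_eq] at hi
          rcases hall i hi with h | h <;> simp [Nat.testBit_or, h]
        have h2 : j' ||| g' ≤ s₀ := by
          apply le_of_testBit_subset'
          intro i hi
          rw [Nat.testBit_or] at hi
          rcases Bool.or_eq_true_iff.mp hi with h | h
          · exact hjsub' i h
          · exact hgsub' i h
        have hor_le : 2 ^ c - 1 ≤ s₀ := le_trans h1 h2
        have h4 : 2 ^ (ℓ + 2) = 2 * 2 ^ (ℓ + 1) := by rw [pow_succ]; ring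
        have hcl2 : c ≤ ℓ + 1 := by
          by_contra h
          have h5 : 2 ^ (ℓ + 2) ≤ 2 ^ c := Nat.pow_le_pow_right (by norm_num) (by omega)
          omega
        have hceq : c = ℓ + 1 := le_antisymm hcl2 hclc
        refine ⟨by omega, by omega, ?_⟩
        rw [hCjg]
        have h6 : ((2 ^ (ℓ + 1) : ℕ) : ℤ) = (2 : ℤ) ^ (ℓ + 1) := hZ
        omega
      · push_neg at hall
        obtain ⟨i, hic, hb1, hb2⟩ := hall
        have hji : j'.testBit i = false := by simpa using hb1
        have hgi : g'.testBit i = false := by simpa using hb2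
        -- setup for the final computation
        set X := 2 ^ (t - c - 1) * (B + 1) with hX_def
        have hXeq : 2 ^ t * (B + 1) = 2 ^ (c + 1) * X := by
          rw [hX_def, ← mul_assoc, ← pow_add]
          congr 2
          omega
        have hX2 : 2 ≤ X := by
          have h1 : 1 * (B + 1) ≤ 2 ^ (t - c - 1) * (B + 1) :=
            Nat.mul_le_mul_right _ Nat.one_le_two_pow
          omega
        have hMX : 2 ^ (c + 1) * X = 2 ^ (c + 1) * (X - 2) + 2 ^ (c + 1) * 2 := by
          rw [← Nat.mul_add]
          congr 1
          omega
        set A := 2 ^ (c + 1) * (X - 2) with hA_def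
        have hNA : 2 ^ t * (B + 1) = A + 2 ^ (c + 1) * 2 := by rw [hXeq, hMX]
        set y := 2 ^ (c + 1) - (g' + 1) with hy_def
        set r := A + y with hr_def
        set s := 2 ^ c - (j' + 1) with hs_def
        have hg'c : g' < 2 ^ (c + 1) := by omega
        have hj'c : j' < 2 ^ c := by omega
        have hrbit : r.testBit i = true := by
          rw [hr_def, hA_def, Nat.testBit_two_pow_mul_add _ (show y < 2 ^ (c + 1) by omega) i,
            if_pos (show i < c + 1 by omega), hy_def,
            Nat.testBit_two_pow_sub_succ hg'c, hgi]
          simp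
          omega
        have hsbit : s.testBit i = true := by
          rw [hs_def, Nat.testBit_two_pow_sub_succ hj'c, hji]
          simp
          omega
        have hand : r &&& s ≠ 0 := by
          intro h0
          have hb : (r &&& s).testBit i = true := by
            rw [Nat.testBit_and, hrbit, hsbit]; rfl
          rw [h0] at hb
          simp at hb
        have hsum : 2 ^ t * (B + 1) - C - 2 = r + s := by omega
        have hcond : (0 : ℤ) ≤ ((2 ^ t * (B + 1) : ℕ) : ℤ) + C - 1 - j - 2 * g := by omega
        rw [if_pos hcond]
        have htn : (((2 ^ t * (B + 1) : ℕ) : ℤ) + C - 1 - j - 2 * g).toNat = r := by omega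
        rw [htn, hsum, Nat.even_iff, kummer_aux' (r + s) r s le_rfl, if_neg hand]
end

section
/- Let n > 2k ≥ 4 and let B_{n,k} = F₂[R, V₁, …, V_{n−1}]/J_{n,k}, where J_{n,k} is the ideal generated by V_i² + V_i·R (1 ≤ i ≤ n−1) and by ∏_{i∈S} V_i for all S ⊆ {1,…,n−1} with |S| = k. For L ⊆ {1,…,n−1} and an integer d ≥ k−1, define r_{L,d} = ∑_{S⊆L, |S|≤k−1} R^{d−|S|}·∏_{i∈S} V_i ∈ B_{n,k}. Then for every L ⊆ {1,…,n−1} with |L| ≥ k and every ℓ ∈ {1,…,n−1}: (a) if ℓ ∉ L, then V_ℓ · r_{L,|L|−1} = r_{L∪{ℓ},|L|} + r_{L,|L|} in B_{n,k}; (b) if ℓ ∈ L, then V_ℓ · r_{L,|L|−1} = 0 in B_{n,k}. -/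
open MvPolynomial
open Finset

set_option maxHeartbeats 1000000

noncomputable section

/-- The relations defining `B_{n,k}`: in `F₂[R, V₁, …, V_{n−1}]`, realized as
`MvPolynomial (Option (Fin (n-1))) (ZMod 2)` with `X none = R` and
`X (some j) = V_{j+1}`, take `V_i² + V_i·R` for all `i`, and `∏_{i∈S} V_i`
for all `S` with `|S| = k`. -/
def linkRels (n k : ℕ) : Set (MvPolynomial (Option (Fin (n - 1))) (ZMod 2)) :=
  (Set.range fun i : Fin (n - 1) => X (some i) ^ 2 + X (some i) * X none) ∪
  ((fun S : Finset (Fin (n - 1)) => ∏ i ∈ S, X (some i)) '' {S | S.card = k})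

/-- The algebra `B_{n,k} = F₂[R, V₁, …, V_{n−1}]/J_{n,k}`. -/
abbrev LinkAlg (n k : ℕ) :=
  MvPolynomial (Option (Fin (n - 1))) (ZMod 2) ⧸ Ideal.span (linkRels n k)

/-- The element `r_{L,d} = ∑_{S⊆L, |S|≤k−1} R^{d−|S|}·∏_{i∈S} V_i` of `B_{n,k}`. -/
def rEl (n k : ℕ) (L : Finset (Fin (n - 1))) (d : ℕ) : LinkAlg n k :=
  Ideal.Quotient.mk _
    (∑ S ∈ L.powerset.filter (fun S => S.card ≤ k - 1),
      X none ^ (d - S.card) * ∏ i ∈ S, X (some i))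

/-- For `n > 2k ≥ 4`, `L ⊆ {1,…,n−1}` with `|L| ≥ k` and any `ℓ`:
(a) if `ℓ ∉ L` then `V_ℓ · r_{L,|L|−1} = r_{L∪{ℓ},|L|} + r_{L,|L|}` in `B_{n,k}`;
(b) if `ℓ ∈ L` then `V_ℓ · r_{L,|L|−1} = 0` in `B_{n,k}`.
Here the index `l : Fin (n-1)` corresponds to `V_{l+1}`, i.e. `X (some l)`. -/
theorem mul_rEl (n k : ℕ) (hk : 2 ≤ k) (hnk : 2 * k < n)
    (L : Finset (Fin (n - 1))) (hL : k ≤ L.card) (l : Fin (n - 1)) :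
    (l ∉ L → Ideal.Quotient.mk (Ideal.span (linkRels n k)) (X (some l)) *
        rEl n k L (L.card - 1) =
      rEl n k (insert l L) L.card + rEl n k L L.card) ∧
    (l ∈ L → Ideal.Quotient.mk (Ideal.span (linkRels n k)) (X (some l)) *
        rEl n k L (L.card - 1) = 0) := by
  classical
  set v : Fin (n - 1) → LinkAlg n k :=
    fun i => Ideal.Quotient.mk (Ideal.span (linkRels n k)) (X (some i)) with hv
  set r : LinkAlg n k := Ideal.Quotient.mk (Ideal.span (linkRels n k)) (X none) with hr
  have htwo : (2 : LinkAlg n k) = 0 := by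
    have h2 : (2 : MvPolynomial (Option (Fin (n - 1))) (ZMod 2)) = 0 := by
      exact_mod_cast CharP.cast_eq_zero (MvPolynomial (Option (Fin (n - 1))) (ZMod 2)) 2
    calc (2 : LinkAlg n k) = Ideal.Quotient.mk _ 2 := by rw [map_ofNat]
      _ = 0 := by rw [h2, map_zero]
  have hadd : ∀ a : LinkAlg n k, a + a = 0 := fun a => by rw [← two_mul, htwo, zero_mul]
  have hsq : ∀ i, v i * v i = v i * r := by
    intro i
    have hmem : X (some i) ^ 2 + X (some i) * X none ∈ linkRels n k := Or.inl ⟨i, rfl⟩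
    have h0 : v i * v i + v i * r = 0 := by
      have := Ideal.Quotient.eq_zero_iff_mem.2 (Ideal.subset_span hmem)
      calc v i * v i + v i * r
          = Ideal.Quotient.mk _ (X (some i) ^ 2 + X (some i) * X none) := by
            rw [map_add, map_mul, map_pow, sq]
        _ = 0 := this
    linear_combination h0 - hadd (v i * r)
  have hprod : ∀ S : Finset (Fin (n - 1)), S.card = k → ∏ i ∈ S, v i = 0 := by
    intro S hS
    have hmem : (∏ i ∈ S, X (some i)) ∈ linkRels n k := Or.inr ⟨S, hS, rfl⟩
    calc ∏ i ∈ S, v i = Ideal.Quotient.mk _ (∏ i ∈ S, X (some i)) := (map_prod _ _ _).symm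
      _ = 0 := Ideal.Quotient.eq_zero_iff_mem.2 (Ideal.subset_span hmem)
  have hrEl : ∀ (M : Finset (Fin (n - 1))) (d : ℕ),
      rEl n k M d = ∑ S ∈ M.powerset.filter (fun S => S.card ≤ k - 1),
        r ^ (d - S.card) * ∏ i ∈ S, v i := by
    intro M d
    rw [rEl, map_sum]
    exact Finset.sum_congr rfl fun S _ => by rw [map_mul, map_pow, map_prod]
  constructor
  · -- case l ∉ L
    intro hl
    have key : ∀ S ∈ L.powerset.filter (fun S => S.card ≤ k - 2),
        v l * (r ^ (L.card - 1 - S.card) * ∏ i ∈ S, v i)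
          = r ^ (L.card - (insert l S).card) * ∏ i ∈ insert l S, v i := by
      intro S hS
      simp only [mem_filter, mem_powerset] at hS
      have hlS : l ∉ S := fun h => hl (hS.1 h)
      rw [Finset.prod_insert hlS, Finset.card_insert_of_notMem hlS,
        show L.card - (S.card + 1) = L.card - 1 - S.card from by omega]
      ring
    have hLHS : (v l) * rEl n k L (L.card - 1)
        = ∑ S ∈ L.powerset.filter (fun S => S.card ≤ k - 2),
            r ^ (L.card - (insert l S).card) * ∏ i ∈ insert l S, v i := by
      rw [hrEl, Finset.mul_sum,
        ← Finset.sum_filter_add_sum_filter_not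
          (L.powerset.filter (fun S => S.card ≤ k - 1)) (fun S => S.card ≤ k - 2)]
      have hz : ∑ S ∈ (L.powerset.filter (fun S => S.card ≤ k - 1)).filter
          (fun S => ¬ S.card ≤ k - 2),
          v l * (r ^ (L.card - 1 - S.card) * ∏ i ∈ S, v i) = 0 := by
        refine Finset.sum_eq_zero fun S hS => ?_
        simp only [mem_filter, mem_powerset] at hS
        have hlS : l ∉ S := fun h => hl (hS.1.1 h)
        have hcard : (insert l S).card = k := by
          rw [Finset.card_insert_of_notMem hlS]; omega
        calc v l * (r ^ (L.card - 1 - S.card) * ∏ i ∈ S, v i)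
            = r ^ (L.card - 1 - S.card) * ∏ i ∈ insert l S, v i := by
              rw [Finset.prod_insert hlS]; ring
          _ = 0 := by rw [hprod _ hcard, mul_zero]
      rw [hz, add_zero, Finset.filter_filter]
      rw [Finset.filter_congr (fun S _ => by constructor <;> intro h <;> omega :
        ∀ S ∈ L.powerset, (S.card ≤ k - 1 ∧ S.card ≤ k - 2) ↔ S.card ≤ k - 2)]
      exact Finset.sum_congr rfl key
    have hdisj : Disjoint ((L.powerset).filter (fun S => S.card ≤ k - 1))
        ((Finset.image (insert l) L.powerset).filter (fun S => S.card ≤ k - 1)) := by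
      rw [Finset.disjoint_left]
      intro S h1 h2
      simp only [mem_filter, mem_powerset, Finset.mem_image] at h1 h2
      obtain ⟨⟨T, _, rfl⟩, -⟩ := h2
      exact hl (h1.1 (Finset.mem_insert_self l T))
    have hinj : ∀ x ∈ L.powerset.filter (fun S => (insert l S).card ≤ k - 1),
        ∀ y ∈ L.powerset.filter (fun S => (insert l S).card ≤ k - 1),
        insert l x = insert l y → x = y := by
      intro x hx y hy hxy
      simp only [mem_filter, mem_powerset] at hx hy
      have hlx : l ∉ x := fun h => hl (hx.1 h)
      have hly : l ∉ y := fun h => hl (hy.1 h)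
      rw [← Finset.erase_insert hlx, hxy, Finset.erase_insert hly]
    have hRHS : rEl n k (insert l L) L.card
        = (∑ S ∈ L.powerset.filter (fun S => S.card ≤ k - 1),
            r ^ (L.card - S.card) * ∏ i ∈ S, v i)
          + ∑ S ∈ L.powerset.filter (fun S => S.card ≤ k - 2),
            r ^ (L.card - (insert l S).card) * ∏ i ∈ insert l S, v i := by
      rw [hrEl, Finset.powerset_insert, Finset.filter_union, Finset.sum_union hdisj,
        Finset.filter_image, Finset.sum_image hinj]
      congr 1
      rw [Finset.filter_congr (fun S hS => ?_ :
        ∀ S ∈ L.powerset, ((insert l S).card ≤ k - 1) ↔ S.card ≤ k - 2)]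
      simp only [mem_powerset] at hS
      have hlS : l ∉ S := fun h => hl (hS h)
      rw [Finset.card_insert_of_notMem hlS]
      constructor <;> intro h <;> omega
    rw [hLHS, hRHS, hrEl L L.card]
    linear_combination - hadd (∑ S ∈ L.powerset.filter (fun S => S.card ≤ k - 1),
      r ^ (L.card - S.card) * ∏ i ∈ S, v i)
  · -- case l ∈ L
    intro hl
    rw [hrEl, Finset.mul_sum,
      ← Finset.sum_filter_add_sum_filter_not
        (L.powerset.filter (fun S => S.card ≤ k - 1)) (fun S => l ∈ S)]
    have h1 : ∑ S ∈ (L.powerset.filter (fun S => S.card ≤ k - 1)).filter (fun S => l ∈ S),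
        v l * (r ^ (L.card - 1 - S.card) * ∏ i ∈ S, v i)
        = ∑ S ∈ (L.powerset.filter (fun S => S.card ≤ k - 1)).filter (fun S => l ∈ S),
          r ^ (L.card - S.card) * ∏ i ∈ S, v i := by
      refine Finset.sum_congr rfl fun S hS => ?_
      simp only [mem_filter, mem_powerset] at hS
      obtain ⟨⟨hSL, hSk⟩, hlS⟩ := hS
      have hprodS : v l * ∏ i ∈ S, v i = r * ∏ i ∈ S, v i := by
        rw [← Finset.mul_prod_erase S v hlS, ← mul_assoc, hsq]; ring
      have hcard : S.card ≤ L.card := Finset.card_le_card hSL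
      calc v l * (r ^ (L.card - 1 - S.card) * ∏ i ∈ S, v i)
          = r ^ (L.card - 1 - S.card) * (v l * ∏ i ∈ S, v i) := by ring
        _ = r ^ (L.card - 1 - S.card) * (r * ∏ i ∈ S, v i) := by rw [hprodS]
        _ = r ^ (L.card - 1 - S.card + 1) * ∏ i ∈ S, v i := by rw [pow_succ]; ring
        _ = r ^ (L.card - S.card) * ∏ i ∈ S, v i := by
            rw [show L.card - 1 - S.card + 1 = L.card - S.card from by omega]
    have h2 : ∑ S ∈ (L.powerset.filter (fun S => S.card ≤ k - 1)).filter (fun S => ¬ l ∈ S),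
        v l * (r ^ (L.card - 1 - S.card) * ∏ i ∈ S, v i)
        = ∑ S ∈ L.powerset.filter (fun S => l ∉ S ∧ S.card ≤ k - 2),
          r ^ (L.card - (insert l S).card) * ∏ i ∈ insert l S, v i := by
      rw [← Finset.sum_filter_add_sum_filter_not
        ((L.powerset.filter (fun S => S.card ≤ k - 1)).filter (fun S => ¬ l ∈ S))
        (fun S => S.card ≤ k - 2)]
      have hz : ∑ S ∈ (((L.powerset.filter (fun S => S.card ≤ k - 1)).filter
          (fun S => ¬ l ∈ S)).filter (fun S => ¬ S.card ≤ k - 2)),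
          v l * (r ^ (L.card - 1 - S.card) * ∏ i ∈ S, v i) = 0 := by
        refine Finset.sum_eq_zero fun S hS => ?_
        simp only [mem_filter, mem_powerset] at hS
        obtain ⟨⟨⟨hSL, hSk⟩, hlS⟩, hSk2⟩ := hS
        have hcard : (insert l S).card = k := by
          rw [Finset.card_insert_of_notMem hlS]; omega
        calc v l * (r ^ (L.card - 1 - S.card) * ∏ i ∈ S, v i)
            = r ^ (L.card - 1 - S.card) * ∏ i ∈ insert l S, v i := by
              rw [Finset.prod_insert hlS]; ring
          _ = 0 := by rw [hprod _ hcard, mul_zero]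
      rw [hz, add_zero]
      have hsets : ((L.powerset.filter (fun S => S.card ≤ k - 1)).filter
          (fun S => ¬ l ∈ S)).filter (fun S => S.card ≤ k - 2)
          = L.powerset.filter (fun S => l ∉ S ∧ S.card ≤ k - 2) := by
        ext S
        simp only [Finset.mem_filter, Finset.mem_powerset]
        have hh : S.card ≤ k - 2 → S.card ≤ k - 1 := by omega
        tauto
      rw [hsets]
      refine Finset.sum_congr rfl fun S hS => ?_
      simp only [mem_filter, mem_powerset] at hS
      obtain ⟨hSL, hlS, hSk⟩ := hS
      rw [Finset.prod_insert hlS, Finset.card_insert_of_notMem hlS,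
        show L.card - (S.card + 1) = L.card - 1 - S.card from by omega]
      ring
    have h3 : ∑ S ∈ (L.powerset.filter (fun S => S.card ≤ k - 1)).filter (fun S => l ∈ S),
        r ^ (L.card - S.card) * ∏ i ∈ S, v i
        = ∑ S ∈ L.powerset.filter (fun S => l ∉ S ∧ S.card ≤ k - 2),
          r ^ (L.card - (insert l S).card) * ∏ i ∈ insert l S, v i := by
      refine Finset.sum_bij' (fun S _ => S.erase l) (fun S _ => insert l S) ?_ ?_ ?_ ?_ ?_
      · intro S hS
        simp only [mem_filter, mem_powerset] at hS ⊢
        obtain ⟨⟨hSL, hSk⟩, hlS⟩ := hS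
        have h1 : 1 ≤ S.card := Finset.card_pos.2 ⟨l, hlS⟩
        refine ⟨(Finset.erase_subset l S).trans hSL, Finset.notMem_erase l S, ?_⟩
        rw [Finset.card_erase_of_mem hlS]; omega
      · intro S hS
        simp only [mem_filter, mem_powerset] at hS ⊢
        obtain ⟨hSL, hlS, hSk⟩ := hS
        exact ⟨⟨Finset.insert_subset hl hSL,
          by rw [Finset.card_insert_of_notMem hlS]; omega⟩, Finset.mem_insert_self l S⟩
      · intro S hS
        simp only [mem_filter] at hS
        exact Finset.insert_erase hS.2
      · intro S hS
        simp only [mem_filter] at hS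
        exact Finset.erase_insert hS.2.1
      · intro S hS
        simp only [mem_filter] at hS
        rw [Finset.insert_erase hS.2]
    rw [h1, h2, h3]
    exact hadd _

end
end
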